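/- Suppose F ⊆ ℕ is such that each column F_n is computable, and suppose there is a function f ≤_T ∅′ (i.e., f is limit computable: f(n) = lim_s g(n,s) for a computable g) such that f(n) is a characteristic index for F_n for every n (i.e., φ_{f(n)} is the characteristic function of F_n). Then there is a computable set F̂ ⊆ ℕ such that F̂_n =* F_n for every n (the symmetric difference of F̂_n and F_n is finite). Consequently, if F is maximal almost disjoint at the computable sets then no such limit computable f exists. -/

import Mathlib

/-- The `n`-th column of a set of naturals. -/
def column (F : Set ℕ) (n : ℕ) : Set ℕ := {x | Nat.pair x n ∈ F}

/-- The `e`-th partial computable function. -/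
def phi (e : ℕ) : ℕ →. ℕ := (Denumerable.ofNat Nat.Partrec.Code e).eval

namespace NoDelta2Aux

open Nat.Partrec Nat.Partrec.Code Computable
open Classical

theorem computable_nat_find {α : Type} [Primcodable α] {p : α → ℕ → Bool}
    (hp : Computable₂ p) (H : ∀ a, ∃ n, p a n = true) :
    Computable fun a => Nat.find (H a) := by
  have h1 : Partrec fun a => Nat.rfind fun n => (Part.some (p a n) : Part Bool) :=
    Partrec.rfind hp.partrec₂
  refine h1.of_eq_tot fun a => ?_
  refine Nat.mem_rfind.2 ?_
  refine ⟨by simpa using Nat.find_spec (H a), fun {m} hm => ?_⟩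
  simpa using Nat.find_min (H a) hm

def stepF (g : ℕ → ℕ → ℕ) (m s : ℕ) : Option ℕ :=
  Nat.Partrec.Code.evaln (s + m.unpair.1)
    (Denumerable.ofNat Nat.Partrec.Code (g m.unpair.2 (s + m.unpair.1))) m.unpair.1

theorem stepF_comp {g : ℕ → ℕ → ℕ} (hg : Computable₂ g) : Computable₂ (stepF g) := by
  have hx : Computable fun q : ℕ × ℕ => q.1.unpair.1 :=
    ((Primrec.fst.comp Primrec.unpair).comp Primrec.fst).to_comp
  have hn : Computable fun q : ℕ × ℕ => q.1.unpair.2 :=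
    ((Primrec.snd.comp Primrec.unpair).comp Primrec.fst).to_comp
  have hstage : Computable fun q : ℕ × ℕ => q.2 + q.1.unpair.1 :=
    (Primrec.nat_add.comp Primrec.snd ((Primrec.fst.comp Primrec.unpair).comp Primrec.fst)).to_comp
  have hcode : Computable fun q : ℕ × ℕ =>
      Denumerable.ofNat Nat.Partrec.Code (g q.1.unpair.2 (q.2 + q.1.unpair.1)) :=
    (Computable.ofNat _).comp (hg.comp hn hstage)
  exact (primrec_evaln.to_comp.comp ((hstage.pair hcode).pair hx)).of_eq fun q => rfl

theorem stepF_total {F : Set ℕ} {f : ℕ → ℕ} {g : ℕ → ℕ → ℕ}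
    (hlim : ∀ n, ∀ᶠ s in Filter.atTop, g n s = f n)
    (hchar : ∀ n x, phi (f n) x = Part.some (if x ∈ column F n then 1 else 0)) :
    ∀ m, ∃ s, (stepF g m s).isSome = true := by
  intro m
  obtain ⟨s₀, hs₀⟩ := Filter.eventually_atTop.1 (hlim m.unpair.2)
  have hv : (if m.unpair.1 ∈ column F m.unpair.2 then 1 else 0) ∈
      (Denumerable.ofNat Nat.Partrec.Code (f m.unpair.2)).eval m.unpair.1 := by
    show _ ∈ phi (f m.unpair.2) m.unpair.1
    rw [hchar]; exact Part.mem_some _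
  obtain ⟨k, hk⟩ := evaln_complete.1 hv
  refine ⟨max k s₀, ?_⟩
  have hgf : g m.unpair.2 (max k s₀ + m.unpair.1) = f m.unpair.2 :=
    hs₀ _ (le_trans (le_max_right _ _) (Nat.le_add_right _ _))
  have hmono := evaln_mono (k₂ := max k s₀ + m.unpair.1)
    (le_trans (le_max_left k s₀) (Nat.le_add_right _ _)) hk
  rw [Option.isSome_iff_exists]
  exact ⟨_, by rw [stepF, hgf]; exact hmono⟩

def FbF (g : ℕ → ℕ → ℕ) (tot : ∀ m, ∃ s, (stepF g m s).isSome = true) (m : ℕ) : ℕ :=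
  (stepF g m (Nat.find (tot m))).getD 0

theorem FbF_comp {g : ℕ → ℕ → ℕ} (hg : Computable₂ g)
    (tot : ∀ m, ∃ s, (stepF g m s).isSome = true) : Computable (FbF g tot) := by
  have hsome : Computable₂ fun m s => (stepF g m s).isSome :=
    (Primrec.option_isSome.to_comp.comp (stepF_comp hg)).to₂
  have hfind : Computable fun m => Nat.find (tot m) := computable_nat_find hsome tot
  exact Computable.option_getD ((stepF_comp hg).comp Computable.id hfind) (Computable.const 0)

theorem FbF_correct {F : Set ℕ} {f : ℕ → ℕ} {g : ℕ → ℕ → ℕ}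
    (hlim : ∀ n, ∀ᶠ s in Filter.atTop, g n s = f n)
    (hchar : ∀ n x, phi (f n) x = Part.some (if x ∈ column F n then 1 else 0))
    (tot : ∀ m, ∃ s, (stepF g m s).isSome = true) (n : ℕ) :
    ∃ s₀, ∀ x, s₀ ≤ x → (FbF g tot (Nat.pair x n) = 1 ↔ x ∈ column F n) := by
  obtain ⟨s₀, hs₀⟩ := Filter.eventually_atTop.1 (hlim n)
  refine ⟨s₀, fun x hx => ?_⟩
  set m := Nat.pair x n with hm
  have hum : m.unpair = (x, n) := Nat.unpair_pair x n
  obtain ⟨v, hv⟩ := Option.isSome_iff_exists.1 (Nat.find_spec (tot m))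
  have hgf : g n (Nat.find (tot m) + x) = f n :=
    hs₀ _ (le_trans hx (Nat.le_add_left _ _))
  have hsv : v ∈ (Denumerable.ofNat Nat.Partrec.Code (f n)).eval x := by
    apply evaln_sound (k := Nat.find (tot m) + x)
    rw [stepF, hum] at hv
    simp only at hv
    rw [hgf] at hv
    exact hv
  rw [show (Denumerable.ofNat Nat.Partrec.Code (f n)).eval x = phi (f n) x from rfl,
    hchar n x] at hsv
  have hveq : v = if x ∈ column F n then 1 else 0 := Part.mem_some_iff.1 hsv
  have hFb : FbF g tot m = v := by rw [FbF, hv]; rfl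
  rw [hFb, hveq]
  by_cases hxF : x ∈ column F n <;> simp [hxF]


section Part2

variable (fb : ℕ → Bool)

def ballF (y x : ℕ) : Bool := Nat.rec true (fun j ih => ih && !fb (Nat.pair x j)) y

theorem ballF_iff (y x : ℕ) : ballF fb y x = true ↔ ∀ j < y, fb (Nat.pair x j) = false := by
  induction y with
  | zero => simp [ballF]
  | succ y ih =>
    show (ballF fb y x && !fb (Nat.pair x y)) = true ↔ _
    rw [Bool.and_eq_true, ih]
    constructor
    · rintro ⟨h1, h2⟩ j hj
      rcases Nat.lt_succ_iff_lt_or_eq.1 hj with h | rfl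
      · exact h1 j h
      · simpa using h2
    · intro h
      exact ⟨fun j hj => h j (Nat.lt_succ_of_lt hj), by simp [h y (Nat.lt_succ_self y)]⟩

def goodF (q : ℕ × ℕ) (x : ℕ) : Bool :=
  (decide (q.2 < x) && fb (Nat.pair x (q.1 + 1))) && ballF fb (q.1 + 1) x

theorem ballF_comp (hfb : Computable fb) : Computable₂ (ballF fb) := by
  have hh : Computable fun r : (ℕ × ℕ) × ℕ × Bool => r.2.2 && !fb (Nat.pair r.1.2 r.2.1) :=
    Primrec.and.to_comp.comp (Computable.snd.comp Computable.snd)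
      ((Primrec.not.to_comp).comp (hfb.comp
        (Primrec₂.natPair.to_comp.comp (Computable.snd.comp Computable.fst)
          (Computable.fst.comp Computable.snd))))
  exact Computable.nat_rec Computable.fst (Computable.const true) hh.to₂

theorem goodF_comp (hfb : Computable fb) : Computable₂ (goodF fb) := by
  have h1 : Computable fun r : (ℕ × ℕ) × ℕ => decide (r.1.2 < r.2) :=
    Primrec.nat_lt.decide.to_comp.comp (Computable.snd.comp Computable.fst) Computable.snd
  have h2 : Computable fun r : (ℕ × ℕ) × ℕ => fb (Nat.pair r.2 (r.1.1 + 1)) :=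
    hfb.comp (Primrec₂.natPair.to_comp.comp Computable.snd
      (Computable.succ.comp (Computable.fst.comp Computable.fst)))
  have h3 : Computable fun r : (ℕ × ℕ) × ℕ => ballF fb (r.1.1 + 1) r.2 :=
    (ballF_comp fb hfb).comp (Computable.succ.comp (Computable.fst.comp Computable.fst))
      Computable.snd
  exact (Primrec.and.to_comp.comp (Primrec.and.to_comp.comp h1 h2) h3).to₂

def rF (H : ∀ q : ℕ × ℕ, ∃ x, goodF fb q x = true) : ℕ → ℕ :=
  fun n => Nat.rec 0 (fun y IH => Nat.find (H (y, IH))) n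

theorem rF_comp (hfb : Computable fb) (H : ∀ q : ℕ × ℕ, ∃ x, goodF fb q x = true) :
    Computable (rF fb H) := by
  have hfind : Computable fun q : ℕ × ℕ => Nat.find (H q) :=
    computable_nat_find (goodF_comp fb hfb) H
  exact Computable.nat_rec Computable.id (Computable.const 0)
    (hfind.comp Computable.snd).to₂

theorem rF_strictMono (H : ∀ q : ℕ × ℕ, ∃ x, goodF fb q x = true) :
    StrictMono (rF fb H) := by
  apply strictMono_nat_of_lt_succ
  intro n
  have := Nat.find_spec (H (n, rF fb H n))
  rw [goodF, Bool.and_eq_true, Bool.and_eq_true] at this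
  exact of_decide_eq_true this.1.1

theorem rF_avoid (H : ∀ q : ℕ × ℕ, ∃ x, goodF fb q x = true) (n j : ℕ) (hj : j < n + 1) :
    fb (Nat.pair (rF fb H (n + 1)) j) = false := by
  have := Nat.find_spec (H (n, rF fb H n))
  rw [goodF, Bool.and_eq_true] at this
  exact (ballF_iff fb _ _).1 this.2 j hj

end Part2


theorem part2main (fb : ℕ → Bool) (hfb : Computable fb)
    (hinf : ∀ n, {x | fb (Nat.pair x n) = true}.Infinite)
    (had : ∀ n k, n ≠ k →
      ({x | fb (Nat.pair x n) = true} ∩ {x | fb (Nat.pair x k) = true}).Finite) :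
    ∃ R : Set ℕ, ComputablePred (· ∈ R) ∧ R.Infinite ∧
      ∀ k, (R ∩ {x | fb (Nat.pair x k) = true}).Finite := by
  have H : ∀ q : ℕ × ℕ, ∃ x, goodF fb q x = true := by
    rintro ⟨y, prev⟩
    set A := {x | fb (Nat.pair x (y + 1)) = true} with hA
    have hBf : (Set.Iic prev ∪
        ⋃ j ∈ Set.Iio (y + 1), (A ∩ {x | fb (Nat.pair x j) = true})).Finite :=
      (Set.finite_Iic prev).union ((Set.finite_Iio (y + 1)).biUnion
        (fun j hj => had (y + 1) j (Nat.ne_of_gt hj)))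
    obtain ⟨x, hxA, hxB⟩ := ((hinf (y + 1)).diff hBf).nonempty
    refine ⟨x, ?_⟩
    rw [goodF, Bool.and_eq_true, Bool.and_eq_true, ballF_iff]
    have h1 : prev < x := by
      by_contra h
      exact hxB (Set.mem_union_left _ (Set.mem_Iic.2 (not_lt.1 h)))
    refine ⟨⟨decide_eq_true h1, hxA⟩, fun j hj => ?_⟩
    by_contra h
    refine hxB (Set.mem_union_right _ ?_)
    refine Set.mem_biUnion (Set.mem_Iio.2 hj) ⟨hxA, ?_⟩
    simpa using h
  have hmono := rF_strictMono fb H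
  have Hle : ∀ x, ∃ m, decide (x ≤ rF fb H m) = true :=
    fun x => ⟨x, decide_eq_true hmono.le_apply⟩
  have hmem : ∀ x, x ∈ Set.range (rF fb H) ↔ rF fb H (Nat.find (Hle x)) = x := by
    intro x
    constructor
    · rintro ⟨N, rfl⟩
      have h1 : Nat.find (Hle (rF fb H N)) ≤ N := Nat.find_min' _ (decide_eq_true le_rfl)
      have h2 := of_decide_eq_true (Nat.find_spec (Hle (rF fb H N)))
      exact le_antisymm (hmono.monotone h1) h2
    · intro h
      exact ⟨_, h⟩
  refine ⟨Set.range (rF fb H), ?_, Set.infinite_range_of_injective hmono.injective, ?_⟩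
  · rw [ComputablePred.computable_iff]
    refine ⟨fun x => decide (rF fb H (Nat.find (Hle x)) = x), ?_, ?_⟩
    · have hple : Computable₂ fun x m => decide (x ≤ rF fb H m) :=
        (Primrec.nat_le.decide.to_comp.comp Computable.fst
          ((rF_comp fb hfb H).comp Computable.snd)).to₂
      exact (Primrec.eq (α := ℕ)).decide.to_comp.comp
        ((rF_comp fb hfb H).comp (computable_nat_find hple Hle)) Computable.id
    · funext x
      exact propext ((hmem x).trans (decide_eq_true_iff).symm)
  · intro k
    apply Set.Finite.subset ((Set.finite_Iic k).image (rF fb H))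
    rintro x ⟨⟨n, rfl⟩, hxk⟩
    refine ⟨n, ?_, rfl⟩
    simp only [Set.mem_Iic]
    by_contra hn
    push_neg at hn
    obtain ⟨m, rfl⟩ : ∃ m, n = m + 1 := ⟨n - 1, by omega⟩
    have hav := rF_avoid fb H m k (by omega)
    rw [Set.mem_setOf_eq] at hxk
    rw [hav] at hxk
    exact Bool.false_ne_true hxk

end NoDelta2Aux


open Classical in
/-- If each column `F_n` of `F` is computable and a limit-computable function `f`
gives a characteristic index for `F_n` uniformly in `n`, then there is a computable
set `F̂` whose columns agree with those of `F` up to finite difference.  Consequently,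
if `F` is maximal almost disjoint at the computable sets then no such `f` exists. -/
theorem no_delta2_indices_for_MAD (F : Set ℕ) (f : ℕ → ℕ) (g : ℕ → ℕ → ℕ)
    (hg : Computable₂ g)
    (hlim : ∀ n, ∀ᶠ s in Filter.atTop, g n s = f n)
    (hchar : ∀ n x, phi (f n) x = Part.some (if x ∈ column F n then 1 else 0)) :
    (∃ Fhat : Set ℕ, ComputablePred (· ∈ Fhat) ∧
      ∀ n, (symmDiff (column Fhat n) (column F n)).Finite) ∧
    (((∀ n, (column F n).Infinite) ∧
      (∀ n k, n ≠ k → (column F n ∩ column F k).Finite) ∧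
      (∀ R : Set ℕ, ComputablePred (· ∈ R) → R.Infinite →
        ∃ n, (R ∩ column F n).Infinite)) → False) := by
  have tot := NoDelta2Aux.stepF_total hlim hchar
  set Fb := NoDelta2Aux.FbF g tot with hFbdef
  have hFbc : Computable Fb := NoDelta2Aux.FbF_comp hg tot
  set χ : ℕ → Bool := fun m => decide (Fb m = 1) with hχdef
  have hχc : Computable χ := (Primrec.eq (α := ℕ)).decide.to_comp.comp hFbc (Computable.const 1)
  -- the computable set
  set Fhat : Set ℕ := {m | χ m = true} with hFhatdef
  have hcolFhat : ∀ n, column Fhat n = {x | χ (Nat.pair x n) = true} := by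
    intro n; ext x; simp [column, Fhat]
  have hcp : ComputablePred (· ∈ Fhat) :=
    ComputablePred.computable_iff.2 ⟨χ, hχc, rfl⟩
  have hcolsχ : ∀ n, (symmDiff {x | χ (Nat.pair x n) = true} (column F n)).Finite := by
    intro n
    obtain ⟨s₀, h⟩ := NoDelta2Aux.FbF_correct hlim hchar tot n
    apply (Set.finite_Iio s₀).subset
    intro x hx
    rw [Set.mem_symmDiff] at hx
    simp only [Set.mem_Iio]
    by_contra hge
    push_neg at hge
    have hiff := h x hge
    rcases hx with ⟨h1, h2⟩ | ⟨h1, h2⟩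
    · rw [Set.mem_setOf_eq, decide_eq_true_iff] at h1
      exact h2 (hiff.1 h1)
    · refine h2 ?_
      rw [Set.mem_setOf_eq, decide_eq_true_iff]
      exact hiff.2 h1
  have hcols : ∀ n, (symmDiff (column Fhat n) (column F n)).Finite := by
    intro n; rw [hcolFhat n]; exact hcolsχ n
  refine ⟨⟨Fhat, hcp, hcols⟩, ?_⟩
  rintro ⟨hFinf, hFad, hMAD⟩
  have hinf' : ∀ n, {x | χ (Nat.pair x n) = true}.Infinite := by
    intro n
    refine ((hFinf n).diff (hcolsχ n)).mono ?_
    rintro x ⟨hxF, hxsd⟩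
    by_contra hxχ
    exact hxsd (Set.mem_symmDiff.2 (Or.inr ⟨hxF, hxχ⟩))
  have had' : ∀ n k, n ≠ k →
      ({x | χ (Nat.pair x n) = true} ∩ {x | χ (Nat.pair x k) = true}).Finite := by
    intro n k hnk
    refine (((hFad n k hnk).union (hcolsχ n)).union (hcolsχ k)).subset ?_
    rintro x ⟨hxn, hxk⟩
    by_cases h1 : x ∈ column F n
    · by_cases h2 : x ∈ column F k
      · exact Or.inl (Or.inl ⟨h1, h2⟩)
      · exact Or.inr (Set.mem_symmDiff.2 (Or.inl ⟨hxk, h2⟩))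
    · exact Or.inl (Or.inr (Set.mem_symmDiff.2 (Or.inl ⟨hxn, h1⟩)))
  obtain ⟨R, hRc, hRinf, hRfin⟩ := NoDelta2Aux.part2main χ hχc hinf' had'
  obtain ⟨n, hn⟩ := hMAD R hRc hRinf
  refine hn (((hRfin n).union (hcolsχ n)).subset ?_)
  rintro x ⟨hxR, hxF⟩
  by_cases hxχ : x ∈ {x | χ (Nat.pair x n) = true}
  · exact Or.inl ⟨hxR, hxχ⟩
  · exact Or.inr (Set.mem_symmDiff.2 (Or.inr ⟨hxF, hxχ⟩))
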